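/- Every semiring S that is both a left CP-semiring and left Gelfand is additively idempotent: s + s = s for all s ∈ S. -/
import Mathlib


universe u

/-- A left CP-semiring: every cyclic left `S`-semimodule is projective. -/
def IsLeftCPSemiring (S : Type u) [Semiring S] : Prop :=
  ∀ (M : Type u) [AddCommMonoid M] [Module S M],
    (∃ m : M, Submodule.span S {m} = ⊤) → Module.Projective S M

namespace CPProof

variable {S : Type u} [Semiring S]

/-- Two elements are related if each is additively bounded by a multiple of the other. -/
def arel (S : Type u) [Semiring S] (x y : S) : Prop :=
  ∃ (n : ℕ) (c d : S), x + c = (n + 1) • y ∧ y + d = (n + 1) • x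

lemma arel_refl (x : S) : arel S x x :=
  ⟨0, 0, 0, by simp, by simp⟩

lemma arel_symm {x y : S} (h : arel S x y) : arel S y x := by
  obtain ⟨n, c, d, h1, h2⟩ := h
  exact ⟨n, d, c, h2, h1⟩

lemma arel_raise {x y c : S} {n : ℕ} (h : x + c = (n + 1) • y) (m : ℕ) :
    x + (c + m • y) = (n + m + 1) • y := by
  have hidx : n + m + 1 = (n + 1) + m := by ring
  rw [hidx, add_nsmul, ← h]
  abel

lemma arel_trans {x y z : S} (h : arel S x y) (h' : arel S y z) : arel S x z := by
  obtain ⟨n, c, d, h1, h2⟩ := h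
  obtain ⟨m, c', d', h3, h4⟩ := h'
  refine ⟨n * m + n + m, c + (n + 1) • c', d' + (m + 1) • d, ?_, ?_⟩
  · have : x + (c + (n + 1) • c') = (n + 1) • (y + c') := by
      rw [smul_add, ← add_assoc, h1]
    rw [this, h3, smul_smul]
    congr 1
    ring
  · have : z + (d' + (m + 1) • d) = (m + 1) • (y + d) := by
      rw [smul_add, ← add_assoc, h4]
    rw [this, h2, smul_smul]
    congr 1
    ring

instance asetoid (S : Type u) [Semiring S] : Setoid S where
  r := arel S
  iseqv := { refl := arel_refl, symm := arel_symm, trans := arel_trans }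

lemma arel_add {x x' y y' : S} (h : arel S x x') (h' : arel S y y') :
    arel S (x + y) (x' + y') := by
  obtain ⟨n, c, d, h1, h2⟩ := h
  obtain ⟨m, c', d', h3, h4⟩ := h'
  have hx := arel_raise h1 m
  have hy := arel_raise h3 n
  have hx' := arel_raise h2 m
  have hy' := arel_raise h4 n
  rw [show m + n + 1 = n + m + 1 by ring] at hy hy'
  refine ⟨n + m, (c + m • x') + (c' + n • y'), (d + m • x) + (d' + n • y), ?_, ?_⟩
  · have : x + y + (c + m • x' + (c' + n • y'))
        = (x + (c + m • x')) + (y + (c' + n • y')) := by abel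
    rw [this, hx, hy, ← smul_add]
  · have : x' + y' + (d + m • x + (d' + n • y))
        = (x' + (d + m • x)) + (y' + (d' + n • y)) := by abel
    rw [this, hx', hy', ← smul_add]

lemma mul_nsmul_right (s : S) (n : ℕ) (y : S) : s * (n • y) = n • (s * y) := by
  induction n with
  | zero => simp
  | succ k ih => rw [succ_nsmul, succ_nsmul, mul_add, ih]

lemma arel_smul (s : S) {x y : S} (h : arel S x y) : arel S (s * x) (s * y) := by
  obtain ⟨n, c, d, h1, h2⟩ := h
  refine ⟨n, s * c, s * d, ?_, ?_⟩
  · rw [← mul_add, h1, mul_nsmul_right]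
  · rw [← mul_add, h2, mul_nsmul_right]

/-- The quotient of `S` by the mutual-boundedness congruence. -/
abbrev AQ (S : Type u) [Semiring S] : Type u := Quotient (asetoid S)

instance : Zero (AQ S) := ⟨Quotient.mk (asetoid S) 0⟩

instance : Add (AQ S) :=
  ⟨Quotient.lift₂ (fun a b => Quotient.mk (asetoid S) (a + b))
    (fun _ _ _ _ h h' => Quotient.sound (arel_add h h'))⟩

instance : AddCommMonoid (AQ S) where
  add := (· + ·)
  zero := 0
  nsmul := nsmulRec
  add_assoc := by
    rintro ⟨a⟩ ⟨b⟩ ⟨c⟩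
    show Quotient.mk (asetoid S) ((a + b) + c) = Quotient.mk (asetoid S) (a + (b + c))
    rw [add_assoc]
  zero_add := by
    rintro ⟨a⟩
    show Quotient.mk (asetoid S) (0 + a) = Quotient.mk (asetoid S) a
    rw [zero_add]
  add_zero := by
    rintro ⟨a⟩
    show Quotient.mk (asetoid S) (a + 0) = Quotient.mk (asetoid S) a
    rw [add_zero]
  add_comm := by
    rintro ⟨a⟩ ⟨b⟩
    show Quotient.mk (asetoid S) (a + b) = Quotient.mk (asetoid S) (b + a)
    rw [add_comm]

instance : SMul S (AQ S) :=
  ⟨fun s => Quotient.lift (fun a => Quotient.mk (asetoid S) (s * a))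
    (fun _ _ h => Quotient.sound (arel_smul s h))⟩

instance : Module S (AQ S) where
  one_smul := by
    rintro ⟨a⟩
    show Quotient.mk (asetoid S) (1 * a) = Quotient.mk (asetoid S) a
    rw [one_mul]
  mul_smul := by
    rintro s t ⟨a⟩
    show Quotient.mk (asetoid S) ((s * t) * a) = Quotient.mk (asetoid S) (s * (t * a))
    rw [mul_assoc]
  smul_zero := by
    intro s
    show Quotient.mk (asetoid S) (s * 0) = Quotient.mk (asetoid S) 0
    rw [mul_zero]
  smul_add := by
    rintro s ⟨a⟩ ⟨b⟩
    show Quotient.mk (asetoid S) (s * (a + b)) = Quotient.mk (asetoid S) (s * a + s * b)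
    rw [mul_add]
  add_smul := by
    rintro s t ⟨a⟩
    show Quotient.mk (asetoid S) ((s + t) * a) = Quotient.mk (asetoid S) (s * a + t * a)
    rw [add_mul]
  zero_smul := by
    rintro ⟨a⟩
    show Quotient.mk (asetoid S) (0 * a) = Quotient.mk (asetoid S) 0
    rw [zero_mul]

/-- The quotient map, as a linear map. -/
def qmap (S : Type u) [Semiring S] : S →ₗ[S] AQ S where
  toFun := Quotient.mk (asetoid S)
  map_add' := fun _ _ => rfl
  map_smul' := fun _ _ => rfl

lemma qmap_surjective : Function.Surjective (qmap S) := by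
  rintro ⟨a⟩
  exact ⟨a, rfl⟩

lemma qmap_span_top : Submodule.span S {qmap S 1} = ⊤ := by
  rw [eq_top_iff]
  intro x _
  obtain ⟨a, rfl⟩ := Quotient.exists_rep x
  have : (⟦a⟧ : AQ S) = a • qmap S 1 := by
    show Quotient.mk (asetoid S) a = Quotient.mk (asetoid S) (a * 1)
    rw [mul_one]
  rw [this]
  exact Submodule.smul_mem _ a (Submodule.mem_span_singleton_self _)

end CPProof

/-- every left CP-semiring which is also left Gelfand (each `1 + s`
has a left inverse) is additively idempotent. -/
theorem addIdempotent_of_leftCP_leftGelfand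
    {S : Type u} [Semiring S]
    (hS : IsLeftCPSemiring S)
    (hG : ∀ s : S, ∃ t : S, t * (1 + s) = 1) :
    ∀ s : S, s + s = s := by
  have key : (1 : S) + 1 = 1 := by
    haveI hproj : Module.Projective S (CPProof.AQ S) :=
      hS (CPProof.AQ S) ⟨CPProof.qmap S 1, CPProof.qmap_span_top⟩
    obtain ⟨f, hf⟩ := Module.projective_lifting_property (CPProof.qmap S)
      (LinearMap.id) CPProof.qmap_surjective
    set ε : S := f (Quotient.mk (CPProof.asetoid S) 1) with hε
    -- ⟦1 + 1⟧ = ⟦1⟧ in the quotient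
    have h21 : (Quotient.mk (CPProof.asetoid S) (1 + 1) : CPProof.AQ S)
        = Quotient.mk (CPProof.asetoid S) 1 := by
      apply Quotient.sound
      refine ⟨1, 0, 1 + 1 + 1, ?_, ?_⟩
      · rw [add_zero, succ_nsmul, one_smul]
      · rw [succ_nsmul, one_smul]
        abel
    -- ε is additively idempotent
    have hidem : ε + ε = ε := by
      have hadd : (Quotient.mk (CPProof.asetoid S) (1 + 1) : CPProof.AQ S)
          = (Quotient.mk (CPProof.asetoid S) 1 : CPProof.AQ S)
            + (Quotient.mk (CPProof.asetoid S) 1 : CPProof.AQ S) := rfl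
      have : ε + ε = f (Quotient.mk (CPProof.asetoid S) (1 + 1)) := by
        rw [hε, hadd, map_add]
      rw [this, h21]
    -- the splitting equation: ⟦ε⟧ = ⟦1⟧
    have hsplit := LinearMap.congr_fun hf (Quotient.mk (CPProof.asetoid S) 1)
    have hrel : CPProof.arel S ε 1 := Quotient.exact hsplit
    obtain ⟨n, c, d, h1, h2⟩ := hrel
    -- (n+1) • ε = ε
    have hpow : ∀ m : ℕ, (m + 1) • ε = ε := by
      intro m
      induction m with
      | zero => rw [zero_add, one_smul]
      | succ k ih => rw [succ_nsmul, ih, hidem]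
    rw [hpow n] at h2
    -- h2 : 1 + d = ε, so ε has a left inverse by the Gelfand property
    obtain ⟨g, hg⟩ := hG d
    have hgε : g * ε = 1 := by rw [← h2]; exact hg
    calc (1 : S) + 1 = g * ε + g * ε := by rw [hgε]
      _ = g * (ε + ε) := (mul_add g ε ε).symm
      _ = g * ε := by rw [hidem]
      _ = 1 := hgε
  intro s
  calc s + s = s * 1 + s * 1 := by rw [mul_one]
    _ = s * (1 + 1) := (mul_add s 1 1).symm
    _ = s * 1 := by rw [key]
    _ = s := mul_one s
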